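/- arXiv:1601.06672 — 2 statements merged into one kernel-verified Lean document; each statement's English description precedes it below -/
import Mathlib

section
/- Let Q ⊆ ℝⁿ be a nonempty compact set and let p, q : ℝⁿ → ℝ be continuous with q(x) > 0 for all x ∈ Q. Then the infimum over x ∈ Q of p(x)/q(x) equals the infimum, over all finite Borel measures μ on ℝⁿ supported in Q satisfying ∫ q dμ = 1, of ∫ p dμ; moreover both infima are attained. -/
open MeasureTheory

/-- For a nonempty compact `Q ⊆ ℝⁿ` and continuous `p, q : ℝⁿ → ℝ`
with `q > 0` on `Q`, the infimum over `x ∈ Q` of `p(x) / q(x)` equals the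
infimum of `∫ p dμ` over all finite Borel measures `μ` supported in `Q` with
`∫ q dμ = 1`; moreover both infima are attained. -/
theorem inf_fractional_eq_inf_moment
    (n : ℕ) (Q : Set (EuclideanSpace ℝ (Fin n))) (hQne : Q.Nonempty)
    (hQcomp : IsCompact Q) (p q : EuclideanSpace ℝ (Fin n) → ℝ)
    (hp : Continuous p) (hq : Continuous q) (hqpos : ∀ x ∈ Q, 0 < q x) :
    sInf ((fun x => p x / q x) '' Q)
        = sInf {r : ℝ | ∃ μ : Measure (EuclideanSpace ℝ (Fin n)),
            IsFiniteMeasure μ ∧ μ Qᶜ = 0 ∧ (∫ x, q x ∂μ) = 1 ∧ r = ∫ x, p x ∂μ}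
      ∧ (∃ x ∈ Q, p x / q x = sInf ((fun x => p x / q x) '' Q))
      ∧ (∃ μ : Measure (EuclideanSpace ℝ (Fin n)),
            IsFiniteMeasure μ ∧ μ Qᶜ = 0 ∧ (∫ x, q x ∂μ) = 1
              ∧ (∫ x, p x ∂μ)
                = sInf {r : ℝ | ∃ μ : Measure (EuclideanSpace ℝ (Fin n)),
                    IsFiniteMeasure μ ∧ μ Qᶜ = 0 ∧ (∫ x, q x ∂μ) = 1
                      ∧ r = ∫ x, p x ∂μ}) := by
  classical
  set f : EuclideanSpace ℝ (Fin n) → ℝ := fun x => p x / q x with hfdef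
  have hfc : ContinuousOn f Q :=
    (hp.continuousOn.div hq.continuousOn (fun x hx => (hqpos x hx).ne'))
  obtain ⟨x₀, hx₀Q, hx₀min⟩ := hQcomp.exists_isMinOn hQne hfc
  have hleast : IsLeast (f '' Q) (f x₀) :=
    ⟨⟨x₀, hx₀Q, rfl⟩, by rintro _ ⟨y, hy, rfl⟩; exact hx₀min hy⟩
  have hm : sInf (f '' Q) = f x₀ := hleast.csInf_eq
  set m : ℝ := f x₀ with hmdef
  have hq0 : 0 < q x₀ := hqpos _ hx₀Q
  -- the optimal measure
  set c : ENNReal := ENNReal.ofReal (q x₀)⁻¹ with hcdef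
  set μ₀ : Measure (EuclideanSpace ℝ (Fin n)) := c • Measure.dirac x₀ with hμ₀def
  have hfin : IsFiniteMeasure μ₀ := by
    constructor
    simp only [hμ₀def, Measure.smul_apply, Measure.dirac_apply_of_mem (Set.mem_univ x₀),
      smul_eq_mul, mul_one]
    exact ENNReal.ofReal_lt_top
  have hcomp : μ₀ Qᶜ = 0 := by
    have : Measure.dirac x₀ Qᶜ = 0 := by
      rw [Measure.dirac_apply' _ hQcomp.measurableSet.compl]
      simp [hx₀Q]
    simp [hμ₀def, Measure.smul_apply, this]
  have hint : ∀ g : EuclideanSpace ℝ (Fin n) → ℝ, ∫ x, g x ∂μ₀ = (q x₀)⁻¹ * g x₀ := by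
    intro g
    rw [hμ₀def, integral_smul_measure, integral_dirac]
    simp [hcdef, ENNReal.toReal_ofReal (inv_nonneg.mpr hq0.le), smul_eq_mul]
  have hqint : ∫ x, q x ∂μ₀ = 1 := by rw [hint]; field_simp
  have hpint : ∫ x, p x ∂μ₀ = m := by
    rw [hint, hmdef, hfdef]; simp [div_eq_inv_mul]
  set S : Set ℝ := {r : ℝ | ∃ μ : Measure (EuclideanSpace ℝ (Fin n)),
      IsFiniteMeasure μ ∧ μ Qᶜ = 0 ∧ (∫ x, q x ∂μ) = 1 ∧ r = ∫ x, p x ∂μ} with hSdef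
  have hmem : m ∈ S := ⟨μ₀, hfin, hcomp, hqint, hpint.symm⟩
  -- lower bound
  have hlb : ∀ r ∈ S, m ≤ r := by
    rintro r ⟨μ, hμfin, hμc, hμq, rfl⟩
    haveI := hμfin
    have haeQ : ∀ᵐ x ∂μ, x ∈ Q := by
      rw [MeasureTheory.ae_iff]
      exact hμc
    have hrestrict : μ.restrict Q = μ := Measure.restrict_eq_self_of_ae_mem haeQ
    have hip : Integrable p μ := by
      have : IntegrableOn p Q μ := hp.continuousOn.integrableOn_compact hQcomp
      rwa [IntegrableOn, hrestrict] at this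
    have hiq : Integrable q μ := by
      have : IntegrableOn q Q μ := hq.continuousOn.integrableOn_compact hQcomp
      rwa [IntegrableOn, hrestrict] at this
    have hle : ∀ᵐ x ∂μ, m * q x ≤ p x := by
      filter_upwards [haeQ] with x hx
      have h1 : m ≤ p x / q x := hx₀min hx
      have h2 : 0 < q x := hqpos x hx
      calc m * q x ≤ (p x / q x) * q x := by
            exact mul_le_mul_of_nonneg_right h1 h2.le
        _ = p x := by field_simp
    have : ∫ x, m * q x ∂μ ≤ ∫ x, p x ∂μ :=
      integral_mono_ae (hiq.const_mul m) hip hle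
    calc m = m * ∫ x, q x ∂μ := by rw [hμq, mul_one]
      _ = ∫ x, m * q x ∂μ := by rw [integral_const_mul]
      _ ≤ ∫ x, p x ∂μ := this
  have hS : IsLeast S m := ⟨hmem, hlb⟩
  have hSinf : sInf S = m := hS.csInf_eq
  refine ⟨by rw [hm, hSinf], ⟨x₀, hx₀Q, hm.symm⟩, ⟨μ₀, hfin, hcomp, hqint, ?_⟩⟩
  rw [hpint, hSinf]
end

section
/- Let i ≥ 1 be an integer, let Q = [0,1] × [0,1] ⊆ ℝ², and consider the grid configuration of k = i² points x_{(a,b)} = ((2a+1)/(2i), (2b+1)/(2i)) for a, b ∈ {0, 1, …, i−1}. Then for every grid point u, min{ infDist(x_u, frontier Q), (1/2) · min_{v ≠ u} ‖x_u − x_v‖ } = 1/(2i); consequently the social cost of the grid configuration is C(grid) = max_u max{ 1 / infDist(x_u, frontier Q), 2 / min_{v ≠ u} ‖x_u − x_v‖ } = 2i, and hence the socially optimal cost for i² cars in the unit square satisfies C* ≤ 2i. -/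
/-- The unit square `[0,1] × [0,1] ⊆ ℝ²`. -/
def unitSquare : Set (EuclideanSpace ℝ (Fin 2)) :=
  {p | p 0 ∈ Set.Icc (0 : ℝ) 1 ∧ p 1 ∈ Set.Icc (0 : ℝ) 1}

/-- The `i × i` grid configuration of `k = i²` points
`x_{(a,b)} = ((2a+1)/(2i), (2b+1)/(2i))`. -/
noncomputable def gridConfig (i : ℕ) : Fin i × Fin i → EuclideanSpace ℝ (Fin 2) :=
  fun ab => (WithLp.equiv 2 (Fin 2 → ℝ)).symm
    ![(2 * (ab.1 : ℝ) + 1) / (2 * i), (2 * (ab.2 : ℝ) + 1) / (2 * i)]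

noncomputable def pt (s t : ℝ) : EuclideanSpace ℝ (Fin 2) :=
  (WithLp.equiv 2 (Fin 2 → ℝ)).symm ![s, t]

@[simp] lemma pt_apply0 (s t : ℝ) : pt s t 0 = s := rfl
@[simp] lemma pt_apply1 (s t : ℝ) : pt s t 1 = t := rfl

lemma dist_pt (s t s' t' : ℝ) :
    dist (pt s t) (pt s' t') = Real.sqrt ((s - s')^2 + (t - t')^2) := by
  rw [EuclideanSpace.dist_eq, Fin.sum_univ_two]
  simp [pt, Real.dist_eq, sq_abs]

lemma norm_sub_pt (s t s' t' : ℝ) :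
    ‖pt s t - pt s' t'‖ = Real.sqrt ((s - s')^2 + (t - t')^2) := by
  rw [← dist_eq_norm, dist_pt]

lemma abs_coord_le_dist (x y : EuclideanSpace ℝ (Fin 2)) (j : Fin 2) :
    |x j - y j| ≤ dist x y := by
  rw [EuclideanSpace.dist_eq, ← Real.dist_eq, ← Real.sqrt_sq dist_nonneg]
  exact Real.sqrt_le_sqrt (Finset.single_le_sum (f := fun i => dist (x i) (y i)^2)
    (fun i _ => sq_nonneg _) (Finset.mem_univ j))

lemma isClosed_unitSquare : IsClosed unitSquare :=
  (isClosed_Icc.preimage (PiLp.continuous_apply (p := 2) (β := fun _ : Fin 2 => ℝ) 0)).inter (isClosed_Icc.preimage (PiLp.continuous_apply (p := 2) (β := fun _ : Fin 2 => ℝ) 1))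

lemma mem_interior_unitSquare {p : EuclideanSpace ℝ (Fin 2)}
    (h0 : p 0 ∈ Set.Ioo (0:ℝ) 1) (h1 : p 1 ∈ Set.Ioo (0:ℝ) 1) :
    p ∈ interior unitSquare := by
  have hU : IsOpen {q : EuclideanSpace ℝ (Fin 2) | q 0 ∈ Set.Ioo (0:ℝ) 1 ∧ q 1 ∈ Set.Ioo (0:ℝ) 1} :=
    (isOpen_Ioo.preimage (PiLp.continuous_apply (p := 2) (β := fun _ : Fin 2 => ℝ) 0)).inter (isOpen_Ioo.preimage (PiLp.continuous_apply (p := 2) (β := fun _ : Fin 2 => ℝ) 1))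
  have hsub : {q : EuclideanSpace ℝ (Fin 2) | q 0 ∈ Set.Ioo (0:ℝ) 1 ∧ q 1 ∈ Set.Ioo (0:ℝ) 1} ⊆ unitSquare :=
    fun q hq => ⟨Set.Ioo_subset_Icc_self hq.1, Set.Ioo_subset_Icc_self hq.2⟩
  exact interior_maximal hsub hU ⟨h0, h1⟩

lemma frontier_unitSquare_mem {q : EuclideanSpace ℝ (Fin 2)} (hq : q ∈ frontier unitSquare) :
    q ∈ unitSquare ∧ (q 0 = 0 ∨ q 0 = 1 ∨ q 1 = 0 ∨ q 1 = 1) := by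
  have hcl : q ∈ unitSquare := by
    have := hq.1
    rwa [isClosed_unitSquare.closure_eq] at this
  refine ⟨hcl, ?_⟩
  by_contra h
  push_neg at h
  obtain ⟨h1, h2, h3, h4⟩ := h
  exact hq.2 (mem_interior_unitSquare
    ⟨lt_of_le_of_ne hcl.1.1 (Ne.symm h1), lt_of_le_of_ne hcl.1.2 h2⟩
    ⟨lt_of_le_of_ne hcl.2.1 (Ne.symm h3), lt_of_le_of_ne hcl.2.2 h4⟩)

lemma left_mem_frontier {t : ℝ} (ht : t ∈ Set.Icc (0:ℝ) 1) :
    pt 0 t ∈ frontier unitSquare := by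
  constructor
  · exact subset_closure (s := unitSquare) ⟨by norm_num, ht⟩
  · intro hmem
    rw [mem_interior_iff_mem_nhds, Metric.mem_nhds_iff] at hmem
    obtain ⟨ε, hε, hball⟩ := hmem
    have hp : pt (-(ε/2)) t ∈ Metric.ball (pt 0 t) ε := by
      rw [Metric.mem_ball, dist_pt]
      rw [show (-(ε/2) - 0)^2 + (t - t)^2 = (ε/2)^2 by ring]
      rw [Real.sqrt_sq (by positivity)]
      linarith
    have := (hball hp).1.1
    simp at this
    linarith

lemma le_infDist' {s : Set (EuclideanSpace ℝ (Fin 2))} {x : EuclideanSpace ℝ (Fin 2)} {b : ℝ}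
    (hs : s.Nonempty) (h : ∀ y ∈ s, b ≤ dist x y) : b ≤ Metric.infDist x s := by
  by_contra hb
  push_neg at hb
  obtain ⟨y, hy, hlt⟩ := (Metric.infDist_lt_iff hs).1 hb
  exact absurd (h y hy) (not_le.2 hlt)

lemma frontier_unitSquare_nonempty : (frontier unitSquare).Nonempty :=
  ⟨pt 0 0, left_mem_frontier ⟨le_refl 0, zero_le_one⟩⟩

/-- lower bound on distance to frontier for a point well inside. -/
lemma infDist_frontier_ge {s t c : ℝ} (hc : 0 ≤ c)
    (hs : c ≤ s) (hs' : s ≤ 1 - c) (htc : c ≤ t) (ht' : t ≤ 1 - c) :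
    c ≤ Metric.infDist (pt s t) (frontier unitSquare) := by
  apply le_infDist' frontier_unitSquare_nonempty
  intro q hq
  obtain ⟨hqQ, hcase⟩ := frontier_unitSquare_mem hq
  rcases hcase with h | h | h | h
  · refine le_trans ?_ (abs_coord_le_dist _ _ 0)
    rw [h, pt_apply0, sub_zero]
    exact hs.trans (le_abs_self s)
  · refine le_trans ?_ (abs_coord_le_dist _ _ 0)
    rw [h, pt_apply0, abs_sub_comm]
    exact le_trans (by linarith) (le_abs_self (1 - s))
  · refine le_trans ?_ (abs_coord_le_dist _ _ 1)
    rw [h, pt_apply1, sub_zero]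
    exact htc.trans (le_abs_self t)
  · refine le_trans ?_ (abs_coord_le_dist _ _ 1)
    rw [h, pt_apply1, abs_sub_comm]
    exact le_trans (by linarith) (le_abs_self (1 - t))

lemma infDist_frontier_le {s t : ℝ} (hs : 0 ≤ s) (ht : t ∈ Set.Icc (0:ℝ) 1) :
    Metric.infDist (pt s t) (frontier unitSquare) ≤ s := by
  have := Metric.infDist_le_dist_of_mem (x := pt s t) (left_mem_frontier ht)
  rwa [dist_pt, show (s - 0)^2 + (t - t)^2 = s^2 by ring, Real.sqrt_sq hs] at this

lemma one_le_sq_of_ne {a b : ℕ} (h : a ≠ b) : 1 ≤ ((a:ℝ) - b)^2 := by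
  have h1 : ((a:ℤ) - b) ≠ 0 := sub_ne_zero.2 (by exact_mod_cast h)
  have h2 : 1 ≤ |(a:ℤ) - b| := Int.one_le_abs h1
  have h3 : (1:ℤ) ≤ ((a:ℤ) - b)^2 := by nlinarith [sq_abs ((a:ℤ) - b)]
  calc (1:ℝ) = ((1:ℤ) : ℝ) := by norm_num
  _ ≤ ((((a:ℤ) - b)^2 : ℤ) : ℝ) := by exact_mod_cast h3
  _ = ((a:ℝ) - b)^2 := by push_cast; ring

lemma gridConfig_eq_pt (i : ℕ) (u : Fin i × Fin i) :
    gridConfig i u = pt ((2 * (u.1:ℝ) + 1) / (2 * i)) ((2 * (u.2:ℝ) + 1) / (2 * i)) := rfl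

lemma grid_norm_sub (i : ℕ) (hi : 0 < i) (u v : Fin i × Fin i) :
    ‖gridConfig i u - gridConfig i v‖
      = Real.sqrt ((((u.1:ℝ) - v.1) / i)^2 + (((u.2:ℝ) - v.2) / i)^2) := by
  have hn : (0:ℝ) < (i:ℝ) := by exact_mod_cast hi
  rw [gridConfig_eq_pt, gridConfig_eq_pt, norm_sub_pt]
  congr 2
  · field_simp
    ring
  · field_simp
    ring

lemma grid_dist_ge (i : ℕ) (hi : 0 < i) (u v : Fin i × Fin i) (hne : v ≠ u) :
    1 / (i:ℝ) ≤ ‖gridConfig i u - gridConfig i v‖ := by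
  have hn : (0:ℝ) < (i:ℝ) := by exact_mod_cast hi
  rw [grid_norm_sub i hi u v]
  have key : (1 / (i:ℝ))^2 ≤ (((u.1:ℝ) - v.1) / i)^2 + (((u.2:ℝ) - v.2) / i)^2 := by
    have hcases : (u.1 : ℕ) ≠ (v.1 : ℕ) ∨ (u.2 : ℕ) ≠ (v.2 : ℕ) := by
      by_contra hco
      push_neg at hco
      exact hne (Prod.ext (Fin.val_injective hco.1.symm) (Fin.val_injective hco.2.symm))
    rw [div_pow, div_pow, div_pow, ← add_div, one_pow]
    apply (div_le_div_iff_of_pos_right (by positivity)).2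
    rcases hcases with h | h
    · nlinarith [one_le_sq_of_ne h, sq_nonneg ((u.2:ℝ) - v.2)]
    · nlinarith [one_le_sq_of_ne h, sq_nonneg ((u.1:ℝ) - v.1)]
  calc (1:ℝ)/i = Real.sqrt ((1/(i:ℝ))^2) := (Real.sqrt_sq (by positivity)).symm
  _ ≤ _ := Real.sqrt_le_sqrt key

lemma grid_neighbor (i : ℕ) (hi : 2 ≤ i) (u : Fin i × Fin i) :
    ∃ v, v ≠ u ∧ ‖gridConfig i u - gridConfig i v‖ = 1 / (i:ℝ) := by
  have hi0 : 0 < i := by omega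
  have hn : (0:ℝ) < (i:ℝ) := by exact_mod_cast hi0
  obtain ⟨a, b⟩ := u
  by_cases h : (a : ℕ) + 1 < i
  · refine ⟨(⟨(a:ℕ)+1, h⟩, b), ?_, ?_⟩
    · intro hc
      have := congrArg (fun w => (w.1 : ℕ)) hc
      simp at this
    · rw [grid_norm_sub i hi0]
      have : (((a:ℕ):ℝ) - (((a:ℕ)+1 : ℕ):ℝ)) = -1 := by push_cast; ring
      simp only []
      rw [show ((((a, b).1 : Fin i) : ℕ) : ℝ) = ((a:ℕ):ℝ) from rfl]
      push_cast
      rw [show ((a:ℝ) - ((a:ℝ)+1))/(i:ℝ) = -(1/i) by ring, show ((b:ℝ) - (b:ℝ))/(i:ℝ) = 0 by ring]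
      rw [show (-(1/(i:ℝ)))^2 + (0:ℝ)^2 = (1/i)^2 by ring]
      exact Real.sqrt_sq (by positivity)
  · have ha : (a : ℕ) = i - 1 := by omega
    have h1 : (a : ℕ) - 1 < i := by omega
    refine ⟨(⟨(a:ℕ)-1, h1⟩, b), ?_, ?_⟩
    · intro hc
      have := congrArg (fun w => (w.1 : ℕ)) hc
      simp at this
      omega
    · rw [grid_norm_sub i hi0]
      have hcast : ((((a:ℕ) - 1 : ℕ) : ℝ)) = ((a:ℕ):ℝ) - 1 := by
        have : 1 ≤ (a:ℕ) := by omega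
        push_cast [this]
        ring
      simp only []
      rw [show (((((a, b).1 : Fin i)) : ℕ) : ℝ) = ((a:ℕ):ℝ) from rfl]
      rw [hcast]
      rw [show ((a:ℕ):ℝ) - (((a:ℕ):ℝ) - 1) = 1 by ring]
      rw [show ((((a,b).2 : Fin i):ℕ):ℝ) - (((b:ℕ)):ℝ) = 0 by norm_num]
      rw [show (1/(i:ℝ))^2 + ((0:ℝ)/(i:ℝ))^2 = (1/i)^2 by ring]
      exact Real.sqrt_sq (by positivity)

/-- `sm(x, u)`: the minimum of the set consisting of the distance from `x u` to
the boundary of the unit square together with the halved distances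
`(1/2) ‖x u - x v‖` to all other cars `v ≠ u`. -/
noncomputable def smVal {ι : Type*} (x : ι → EuclideanSpace ℝ (Fin 2)) (u : ι) : ℝ :=
  sInf (insert (Metric.infDist (x u) (frontier unitSquare))
    {d : ℝ | ∃ v, v ≠ u ∧ d = (1 / 2) * ‖x u - x v‖})

/-- The social cost `C(x) = max_u max{1 / infDist(x^u, frontier Q),
2 / min_{v ≠ u} ‖x^u - x^v‖}` of a configuration in the unit square, the inner
maximum being taken over the set consisting of the reciprocal boundary distance
together with the reciprocal distances to all other cars. -/
noncomputable def socialCostSquare {ι : Type*}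
    (x : ι → EuclideanSpace ℝ (Fin 2)) : ℝ :=
  ⨆ u, sSup (insert (1 / Metric.infDist (x u) (frontier unitSquare))
    {d : ℝ | ∃ v, v ≠ u ∧ d = 2 / ‖x u - x v‖})

/-- For the `i × i` grid configuration in the unit square
(`i ≥ 1`), every point has `sm`-value `1/(2i)`, the social cost of the grid is
`2i`, and hence the socially optimal cost for `i²` cars in the unit square is
at most `2i`. -/
theorem gridConfig_sm_and_socialCost (i : ℕ) (hi : 1 ≤ i) :
    (∀ u, smVal (gridConfig i) u = 1 / (2 * i))
      ∧ socialCostSquare (gridConfig i) = 2 * i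
      ∧ sInf {c : ℝ | ∃ y : Fin i × Fin i → EuclideanSpace ℝ (Fin 2),
            (∀ u, y u ∈ unitSquare) ∧ c = socialCostSquare y} ≤ 2 * i := by
  have hi0 : 0 < i := hi
  have hn0 : (0:ℝ) < (i:ℝ) := by exact_mod_cast hi0
  have hn1 : (1:ℝ) ≤ (i:ℝ) := by exact_mod_cast hi
  set n : ℝ := (i:ℝ) with hn
  -- coordinate bounds
  have hcoord : ∀ a : Fin i,
      1/(2*n) ≤ (2*(a:ℝ)+1)/(2*n) ∧ (2*(a:ℝ)+1)/(2*n) ≤ 1 - 1/(2*n) := by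
    intro a
    have hav : (a:ℝ) ≤ n - 1 := by
      have h1 : (a:ℕ) + 1 ≤ i := a.isLt
      have : ((a:ℕ):ℝ) + 1 ≤ (i:ℝ) := by exact_mod_cast h1
      linarith
    have ha0 : (0:ℝ) ≤ (a:ℝ) := Nat.cast_nonneg _
    constructor
    · apply div_le_div_of_nonneg_right ?_ (by positivity) |>.trans_eq rfl
      linarith
    · rw [show (1:ℝ) - 1/(2*n) = (2*n-1)/(2*n) by field_simp]
      apply div_le_div_of_nonneg_right ?_ (by positivity) |>.trans_eq rfl
      linarith
  have hD_ge : ∀ u : Fin i × Fin i,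
      1/(2*n) ≤ Metric.infDist (gridConfig i u) (frontier unitSquare) := by
    intro u
    rw [gridConfig_eq_pt]
    exact infDist_frontier_ge (by positivity)
      (hcoord u.1).1 (hcoord u.1).2 (hcoord u.2).1 (hcoord u.2).2
  have hD_pos : ∀ u : Fin i × Fin i,
      0 < Metric.infDist (gridConfig i u) (frontier unitSquare) := by
    intro u
    exact lt_of_lt_of_le (by positivity) (hD_ge u)
  have hD_le : ∀ u : Fin i × Fin i,
      Metric.infDist (gridConfig i u) (frontier unitSquare) ≤ (2*(u.1:ℝ)+1)/(2*n) := by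
    intro u
    rw [gridConfig_eq_pt]
    apply infDist_frontier_le (by positivity)
    constructor
    · exact le_trans (by positivity) (hcoord u.2).1
    · exact le_trans (hcoord u.2).2 (by nlinarith [one_div_pos.2 (show (0:ℝ) < 2*n by positivity)])
  -- part 1 : smVal
  have part1 : ∀ u, smVal (gridConfig i) u = 1 / (2 * n) := by
    intro u
    unfold smVal
    apply le_antisymm
    · rcases Nat.lt_or_ge i 2 with hlt | h2
      · -- i = 1
        have hieq : i = 1 := by omega
        have hsub : Subsingleton (Fin i × Fin i) := by rw [hieq]; infer_instance
        have hS : {d : ℝ | ∃ v, v ≠ u ∧ d = (1/2) * ‖gridConfig i u - gridConfig i v‖} = ∅ := by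
          ext d
          simp only [Set.mem_setOf_eq, Set.mem_empty_iff_false, iff_false, not_exists]
          rintro v ⟨hv, -⟩
          exact hv (Subsingleton.elim v u)
        rw [hS, insert_empty_eq, csInf_singleton]
        have hu1 : ((u.1 : Fin i) : ℝ) = 0 := by
          have : (u.1 : ℕ) = 0 := by omega
          exact_mod_cast this
        have := hD_le u
        rw [hu1] at this
        calc Metric.infDist (gridConfig i u) (frontier unitSquare)
            ≤ (2*0+1)/(2*n) := this
          _ = 1/(2*n) := by norm_num
      · obtain ⟨v, hv, hnv⟩ := grid_neighbor i h2 u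
        apply csInf_le
        · refine ⟨0, fun d hd => ?_⟩
          rcases Set.mem_insert_iff.1 hd with rfl | ⟨w, -, rfl⟩
          · exact Metric.infDist_nonneg
          · positivity
        · refine Set.mem_insert_iff.2 (Or.inr ⟨v, hv, ?_⟩)
          rw [hnv]
          ring
    · apply le_csInf ⟨_, Set.mem_insert _ _⟩
      rintro d hd
      rcases Set.mem_insert_iff.1 hd with rfl | ⟨v, hv, rfl⟩
      · exact hD_ge u
      · have := grid_dist_ge i hi0 u v hv
        rw [show 1/(2*n) = (1/2) * (1/n) by ring]
        nlinarith
  have hub : ∀ u : Fin i × Fin i, ∀ d ∈ insert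
      (1 / Metric.infDist (gridConfig i u) (frontier unitSquare))
      {d : ℝ | ∃ v, v ≠ u ∧ d = 2 / ‖gridConfig i u - gridConfig i v‖}, d ≤ 2*n := by
    intro u d hd
    rcases Set.mem_insert_iff.1 hd with rfl | ⟨v, hv, rfl⟩
    · have h1 := hD_ge u
      have h2 := hD_pos u
      rw [div_le_iff₀ h2]
      calc (1:ℝ) = (2*n) * (1/(2*n)) := by field_simp
        _ ≤ (2*n) * _ := by
            apply mul_le_mul_of_nonneg_left h1 (by positivity)
    · have h1 := grid_dist_ge i hi0 u v hv
      have h2 : (0:ℝ) < ‖gridConfig i u - gridConfig i v‖ := lt_of_lt_of_le (by positivity) h1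
      rw [div_le_iff₀ h2]
      calc (2:ℝ) = (2*n) * (1/n) := by field_simp
        _ ≤ (2*n) * _ := by
            apply mul_le_mul_of_nonneg_left h1 (by positivity)
  have part2 : socialCostSquare (gridConfig i) = 2 * n := by
    unfold socialCostSquare
    have hsup : ∀ u : Fin i × Fin i, sSup (insert
        (1 / Metric.infDist (gridConfig i u) (frontier unitSquare))
        {d : ℝ | ∃ v, v ≠ u ∧ d = 2 / ‖gridConfig i u - gridConfig i v‖}) = 2*n := by
      intro u
      apply le_antisymm
      · exact csSup_le ⟨_, Set.mem_insert _ _⟩ (hub u)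
      · rcases Nat.lt_or_ge i 2 with hlt | h2
        · have hieq : i = 1 := by omega
          have hu1 : ((u.1 : Fin i) : ℝ) = 0 := by
            have : (u.1 : ℕ) = 0 := by omega
            exact_mod_cast this
          have hDle := hD_le u
          rw [hu1] at hDle
          have hDeq : Metric.infDist (gridConfig i u) (frontier unitSquare) = 1/(2*n) := by
            apply le_antisymm
            · calc _ ≤ (2*0+1)/(2*n) := hDle
                _ = 1/(2*n) := by norm_num
            · exact hD_ge u
          have hmem := le_csSup ⟨2*n, hub u⟩ (Set.mem_insert
            (1 / Metric.infDist (gridConfig i u) (frontier unitSquare)) _)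
          have heq : (2:ℝ)*n = 1 / Metric.infDist (gridConfig i u) (frontier unitSquare) := by
            rw [hDeq]
            field_simp
          rw [heq]
          exact hmem
        · obtain ⟨v, hv, hnv⟩ := grid_neighbor i h2 u
          have hmem : (2:ℝ)*n ∈ insert
              (1 / Metric.infDist (gridConfig i u) (frontier unitSquare))
              {d : ℝ | ∃ v, v ≠ u ∧ d = 2 / ‖gridConfig i u - gridConfig i v‖} := by
            refine Set.mem_insert_iff.2 (Or.inr ⟨v, hv, ?_⟩)
            rw [hnv]
            field_simp
            exact hn
          exact le_csSup ⟨2*n, hub u⟩ hmem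
    haveI : Nonempty (Fin i × Fin i) := ⟨(⟨0, hi0⟩, ⟨0, hi0⟩)⟩
    rw [iSup_congr hsup]
    exact ciSup_const
  refine ⟨part1, part2, ?_⟩
  apply csInf_le
  · refine ⟨0, fun c hc => ?_⟩
    obtain ⟨y, -, rfl⟩ := hc
    apply Real.iSup_nonneg
    intro u
    apply Real.sSup_nonneg
    intro d hd
    rcases Set.mem_insert_iff.1 hd with rfl | ⟨v, -, rfl⟩
    · exact div_nonneg zero_le_one Metric.infDist_nonneg
    · positivity
  · refine ⟨gridConfig i, fun u => ?_, part2.symm⟩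
    rw [gridConfig_eq_pt]
    refine ⟨⟨?_, ?_⟩, ?_, ?_⟩
    · exact le_trans (by positivity) (hcoord u.1).1
    · exact le_trans (hcoord u.1).2 (by nlinarith [one_div_pos.2 (show (0:ℝ) < 2*n by positivity)])
    · exact le_trans (by positivity) (hcoord u.2).1
    · exact le_trans (hcoord u.2).2 (by nlinarith [one_div_pos.2 (show (0:ℝ) < 2*n by positivity)])
end
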